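/- In the setting of the previous context, with u(γ, y') = (∫_{D∖B} y γ e^{-γ y} dx dy) / Q(γ, y'), one has the two-sided bound 1/200 ≤ γ · u(γ, y') ≤ 8/(1 − e^{-1/2}) < 21 for all γ > 0, y' ≥ R. -/

import Mathlib

open MeasureTheory Real Set

/-- The region `D ∖ B((x̂,y'),R)` where `D = D_b × (0,∞)`. -/
def gasRegion {E : Type*} [NormedAddCommGroup E]
    (Db : Set E) (xh : E) (R y' : ℝ) : Set (E × ℝ) :=
  {p | p.1 ∈ Db ∧ 0 < p.2 ∧ R ^ 2 < ‖p.1 - xh‖ ^ 2 + (p.2 - y') ^ 2}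

/-- The mass `Q(γ,y') = ∫_{D∖B} γ e^{-γ y} dx dy`. -/
noncomputable def gasMass (d : ℕ) (Db : Set (EuclideanSpace ℝ (Fin (d - 1))))
    (xh : EuclideanSpace ℝ (Fin (d - 1))) (R y' γ : ℝ) : ℝ :=
  ∫ p in gasRegion Db xh R y', γ * exp (-γ * p.2)

/-- The mean height `u(γ,y') = (∫_{D∖B} y γ e^{-γ y} dx dy)/Q(γ,y')`. -/
noncomputable def gasMeanHeight (d : ℕ) (Db : Set (EuclideanSpace ℝ (Fin (d - 1))))
    (xh : EuclideanSpace ℝ (Fin (d - 1))) (R y' γ : ℝ) : ℝ :=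
  (∫ p in gasRegion Db xh R y', p.2 * (γ * exp (-γ * p.2))) / gasMass d Db xh R y' γ

section helpers
open Filter
lemma hasDeriv_negexp (γ y : ℝ) : HasDerivAt (fun y => -exp (-γ*y)) (γ * exp (-γ*y)) y := by
  have h : HasDerivAt (fun y : ℝ => -γ*y) (-γ) y := by simpa using (hasDerivAt_id y).const_mul (-γ)
  have h2 := h.exp.neg
  exact h2.congr_deriv (by ring)

lemma tendsto_negexp {γ : ℝ} (hγ : 0 < γ) : Tendsto (fun y => -exp (-γ*y)) atTop (nhds 0) := by
  have hb : Tendsto (fun y : ℝ => γ*y) atTop atTop := Tendsto.const_mul_atTop hγ tendsto_id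
  have h1 : Tendsto (fun y : ℝ => exp (-(γ*y))) atTop (nhds 0) :=
    tendsto_exp_neg_atTop_nhds_zero.comp hb
  have := h1.neg
  simp only [neg_zero] at this
  refine this.congr (fun y => by ring_nf)

lemma integral_exp_Ioi {γ : ℝ} (hγ : 0 < γ) (a : ℝ) :
    ∫ y in Ioi a, γ * exp (-γ*y) = exp (-γ*a) := by
  have := integral_Ioi_of_hasDerivAt_of_nonneg' (a := a)
    (fun x _ => hasDeriv_negexp γ x) (fun x _ => by positivity) (tendsto_negexp hγ)
  simpa using this

lemma integrableOn_exp_Ioi {γ : ℝ} (hγ : 0 < γ) (a : ℝ) :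
    IntegrableOn (fun y => γ * exp (-γ*y)) (Ioi a) :=
  integrableOn_Ioi_deriv_of_nonneg' (fun x _ => hasDeriv_negexp γ x)
    (fun x _ => by positivity) (tendsto_negexp hγ)

lemma tendsto_mul_negexp {γ : ℝ} (hγ : 0 < γ) :
    Tendsto (fun y : ℝ => y * exp (-γ*y)) atTop (nhds 0) := by
  have hb : Tendsto (fun y : ℝ => γ*y) atTop atTop := Tendsto.const_mul_atTop hγ tendsto_id
  have h1 := (tendsto_pow_mul_exp_neg_atTop_nhds_zero 1).comp hb
  have h2 := h1.const_mul (1/γ)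
  simp only [mul_zero] at h2
  refine h2.congr (fun y => ?_)
  simp only [Function.comp_apply, pow_one]
  field_simp

lemma hasDeriv_F {γ : ℝ} (hγ : 0 < γ) (y : ℝ) :
    HasDerivAt (fun y => -(y + 1/γ) * exp (-γ*y)) (y * (γ * exp (-γ*y))) y := by
  have h1 : HasDerivAt (fun y : ℝ => -(y + 1/γ)) (-1) y := ((hasDerivAt_id y).add_const (1/γ)).neg
  have hm : HasDerivAt (fun y : ℝ => -γ*y) (-γ) y := by simpa using (hasDerivAt_id y).const_mul (-γ)
  have h2 := hm.exp
  have := h1.mul h2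
  refine this.congr_deriv ?_
  have hne : γ ≠ 0 := hγ.ne'
  field_simp
  ring

lemma integral_mul_exp_Ioi {γ : ℝ} (hγ : 0 < γ) :
    ∫ y in Ioi 0, y * (γ * exp (-γ*y)) = 1/γ := by
  have ht : Tendsto (fun y : ℝ => -(y + 1/γ) * exp (-γ*y)) atTop (nhds 0) := by
    have h1 := (tendsto_mul_negexp hγ).neg
    have h2 := (tendsto_exp_neg_atTop_nhds_zero.comp
      (Tendsto.const_mul_atTop hγ tendsto_id)).const_mul (-(1/γ))
    have := h1.add h2
    simp only [neg_zero, mul_zero, add_zero] at this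
    refine this.congr (fun y => ?_)
    simp only [Function.comp_apply, id_eq]
    ring_nf
  have := integral_Ioi_of_hasDerivAt_of_nonneg' (a := 0)
    (fun x _ => hasDeriv_F hγ x) (fun x hx => by
      have : (0:ℝ) < x := hx
      positivity) ht
  rw [this]
  simp

lemma integrableOn_mul_exp_Ioi {γ : ℝ} (hγ : 0 < γ) :
    IntegrableOn (fun y => y * (γ * exp (-γ*y))) (Ioi 0) := by
  refine integrableOn_Ioi_deriv_of_nonneg' (l := 0) (fun x _ => hasDeriv_F hγ x) (fun x hx => ?_) ?_
  · have : (0:ℝ) < x := hx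
    positivity
  · have h1 := (tendsto_mul_negexp hγ).neg
    have h2 := (tendsto_exp_neg_atTop_nhds_zero.comp
      (Tendsto.const_mul_atTop hγ tendsto_id)).const_mul (-(1/γ))
    have := h1.add h2
    simp only [neg_zero, mul_zero, add_zero] at this
    refine this.congr (fun y => ?_)
    simp only [Function.comp_apply, id_eq]
    ring_nf

lemma integral_exp_Ioo {γ : ℝ} (hγ : 0 < γ) {b : ℝ} (hb : 0 ≤ b) :
    ∫ y in Ioo 0 b, γ * exp (-γ*y) = 1 - exp (-γ*b) := by
  rw [← integral_Ioc_eq_integral_Ioo, ← intervalIntegral.integral_of_le hb]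
  have hint : IntervalIntegrable (fun y => γ * exp (-γ*y)) volume 0 b := by
    apply Continuous.intervalIntegrable
    fun_prop
  rw [intervalIntegral.integral_eq_sub_of_hasDerivAt (fun y _ => hasDeriv_negexp γ y) hint]
  simp
  ring

variable {E' : Type*} [MeasureSpace E'] [SigmaFinite (volume : Measure E')]

lemma prod_setIntegral (s : Set E') (t : Set ℝ) (h : ℝ → ℝ) :
    ∫ p in s ×ˢ t, h p.2 = (volume s).toReal * ∫ y in t, h y := by
  have h1 := setIntegral_prod_mul (μ := (volume : Measure E')) (ν := (volume : Measure ℝ))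
    (fun _ : E' => (1:ℝ)) h s t
  rw [← Measure.volume_eq_prod] at h1
  simpa [Measure.restrict_apply_univ, measureReal_def] using h1

lemma prod_integrableOn {s : Set E'} (hs : volume s ≠ ⊤) {t : Set ℝ} {h : ℝ → ℝ}
    (hh : IntegrableOn h t) :
    IntegrableOn (fun p : E' × ℝ => h p.2) (s ×ˢ t) := by
  rw [IntegrableOn, Measure.volume_eq_prod, ← Measure.prod_restrict]
  haveI : IsFiniteMeasure ((volume : Measure E').restrict s) :=
    ⟨by rwa [Measure.restrict_apply_univ, lt_top_iff_ne_top]⟩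
  have := (integrable_const (1:ℝ) (μ := (volume : Measure E').restrict s)).mul_prod hh
  simpa using this

lemma gasRegion_measurable {E : Type*} [NormedAddCommGroup E] [MeasurableSpace E] [BorelSpace E]
    {Db : Set E} (hDb : MeasurableSet Db) (xh : E) (R y' : ℝ) :
    MeasurableSet (gasRegion Db xh R y') := by
  have : gasRegion Db xh R y' = (Prod.fst ⁻¹' Db) ∩ ((Prod.snd ⁻¹' Ioi (0:ℝ)) ∩
      {p : E × ℝ | R ^ 2 < ‖p.1 - xh‖ ^ 2 + (p.2 - y') ^ 2}) := by
    ext p; simp [gasRegion, and_assoc]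
  rw [this]
  refine (measurable_fst hDb).inter ((measurable_snd measurableSet_Ioi).inter ?_)
  exact measurableSet_lt measurable_const (by fun_prop)


lemma exp_half_gt : (13:ℝ)/8 < exp (1/2) := by
  have h : exp (1/2) * exp (1/2) = exp 1 := by rw [← Real.exp_add]; norm_num
  nlinarith [Real.exp_one_gt_d9, Real.exp_pos (1/2)]

lemma exp_half_lt : exp (1/2) < (5:ℝ)/3 := by
  have h : exp (1/2) * exp (1/2) = exp 1 := by rw [← Real.exp_add]; norm_num
  nlinarith [Real.exp_one_lt_d9, Real.exp_pos (1/2)]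

lemma exp_neg_half_le : exp (-(1/2)) ≤ (8:ℝ)/13 := by
  have hmul : exp (-(1/2)) * exp (1/2) = 1 := by rw [← Real.exp_add]; norm_num
  nlinarith [exp_half_gt, Real.exp_pos (-(1/2))]

lemma exp_neg_half_ge : (3:ℝ)/5 ≤ exp (-(1/2)) := by
  have hmul : exp (-(1/2)) * exp (1/2) = 1 := by rw [← Real.exp_add]; norm_num
  nlinarith [exp_half_lt, Real.exp_pos (-(1/2)), Real.exp_pos (1/2)]

lemma exp_neg_two_gt : (1:ℝ)/20 < exp (-2) := by
  have h2 : exp 2 = exp 1 * exp 1 := by rw [← Real.exp_add]; norm_num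
  have hmul : exp (-2) * exp 2 = 1 := by rw [← Real.exp_add]; norm_num
  nlinarith [Real.exp_one_lt_d9, Real.exp_pos (-2), Real.exp_pos 1]

lemma sqrt3_le : Real.sqrt 3 ≤ 1.74 := by
  rw [show (1.74:ℝ) = Real.sqrt (1.74^2) from (Real.sqrt_sq (by norm_num)).symm]
  exact Real.sqrt_le_sqrt (by norm_num)

end helpers

set_option maxHeartbeats 2000000 in
/-- `1/200 ≤ γ·u(γ,y') ≤ 8/(1−e^{-1/2}) < 21`. -/
theorem archimedes_mean_height_bounds (d : ℕ) (hd : 2 ≤ d)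
    (Db : Set (EuclideanSpace ℝ (Fin (d - 1)))) (hDb : MeasurableSet Db)
    (hDbb : Bornology.IsBounded Db) (hDbpos : 0 < volume Db)
    (R : ℝ) (hR : 0 < R) (xh : EuclideanSpace ℝ (Fin (d - 1)))
    (hball : Metric.ball xh R ⊆ Db)
    (γ y' : ℝ) (hγ : 0 < γ) (hy' : R ≤ y') :
    1 / 200 ≤ γ * gasMeanHeight d Db xh R y' γ
      ∧ γ * gasMeanHeight d Db xh R y' γ ≤ 8 / (1 - exp (-(1 / 2)))
      ∧ 8 / (1 - exp (-(1 / 2))) < 21 := by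
  set A := gasRegion Db xh R y' with hAdef
  set Q := gasMass d Db xh R y' γ with hQdef
  set N := ∫ p in gasRegion Db xh R y', p.2 * (γ * exp (-γ * p.2)) with hNdef
  have hy'0 : 0 < y' := lt_of_lt_of_le hR hy'
  have hA : MeasurableSet A := gasRegion_measurable hDb xh R y'
  have hVfin : volume Db ≠ ⊤ := hDbb.measure_lt_top.ne
  set V := (volume Db).toReal with hVdef
  have hV : 0 < V := ENNReal.toReal_pos hDbpos.ne' hVfin
  have hf0 : ∀ p : EuclideanSpace ℝ (Fin (d - 1)) × ℝ, 0 ≤ γ * exp (-γ * p.2) := fun p => by positivity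
  have hIf : IntegrableOn (fun p : EuclideanSpace ℝ (Fin (d - 1)) × ℝ => γ * exp (-γ * p.2)) (Db ×ˢ Ioi 0) :=
    prod_integrableOn hVfin (integrableOn_exp_Ioi hγ 0)
  have hIg : IntegrableOn (fun p : EuclideanSpace ℝ (Fin (d - 1)) × ℝ => p.2 * (γ * exp (-γ * p.2))) (Db ×ˢ Ioi 0) :=
    prod_integrableOn hVfin (integrableOn_mul_exp_Ioi hγ)
  have hsubT : A ⊆ Db ×ˢ Ioi (0:ℝ) := fun p hp => ⟨hp.1, hp.2.1⟩
  have hIfA : IntegrableOn (fun p : EuclideanSpace ℝ (Fin (d - 1)) × ℝ => γ * exp (-γ * p.2)) A := hIf.mono_set hsubT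
  have hIgA : IntegrableOn (fun p : EuclideanSpace ℝ (Fin (d - 1)) × ℝ => p.2 * (γ * exp (-γ * p.2))) A := hIg.mono_set hsubT
  have hQmono : ∀ S : Set (EuclideanSpace ℝ (Fin (d - 1)) × ℝ), S ⊆ A → ∫ p in S, γ * exp (-γ * p.2) ≤ Q := fun S hS =>
    setIntegral_mono_set hIfA (Filter.Eventually.of_forall hf0) (HasSubset.Subset.eventuallyLE hS)
  -- Lower bound on Q
  have hQle : V / 20 ≤ Q := by
    rcases le_total (γ * y') 1 with hc | hc
    · -- low γ: use heights above the ball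
      have hsub : Db ×ˢ Ioi (y' + R) ⊆ A := by
        rintro ⟨x, y⟩ ⟨hx, hy⟩
        have hy : y' + R < y := hy
        refine ⟨hx, by linarith, ?_⟩
        have hn : (0:ℝ) ≤ ‖x - xh‖ ^ 2 := sq_nonneg _
        nlinarith
      have hval : ∫ p in Db ×ˢ Ioi (y' + R), γ * exp (-γ * p.2) = V * exp (-γ * (y' + R)) := by
        have h1 := prod_setIntegral Db (Ioi (y' + R)) (fun y => γ * exp (-γ * y))
        rw [integral_exp_Ioi hγ] at h1
        exact h1
      have hle2 : γ * (y' + R) ≤ 2 := by nlinarith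
      have hexp : exp (-2) ≤ exp (-γ * (y' + R)) := Real.exp_le_exp.2 (by linarith)
      have : V / 20 ≤ V * exp (-γ * (y' + R)) := by nlinarith [exp_neg_two_gt]
      calc V / 20 ≤ V * exp (-γ * (y' + R)) := this
        _ = ∫ p in Db ×ˢ Ioi (y' + R), γ * exp (-γ * p.2) := hval.symm
        _ ≤ Q := hQmono _ hsub
    · -- high γ: use low heights away from the axis
      haveI : Nontrivial (EuclideanSpace ℝ (Fin (d - 1))) := by
        haveI : Nonempty (Fin (d - 1)) := ⟨⟨0, by omega⟩⟩
        refine ⟨EuclideanSpace.single (Classical.arbitrary _) (1:ℝ), 0, fun h0 => ?_⟩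
        have := congrArg norm h0
        rw [EuclideanSpace.norm_single, norm_zero] at this
        norm_num at this
      haveI hHaarI : ((volume : Measure (EuclideanSpace ℝ (Fin (d - 1))))).IsAddHaarMeasure := by
        have hHaar : ((EuclideanSpace.basisFun (Fin (d-1)) ℝ).toBasis.addHaar).IsAddHaarMeasure :=
          inferInstance
        rwa [OrthonormalBasis.addHaar_eq_volume] at hHaar
      have hfr : Module.finrank ℝ (EuclideanSpace ℝ (Fin (d - 1))) = d - 1 := finrank_euclideanSpace_fin
      set r := Real.sqrt 3 / 2 * R with hrdef
      have hr0 : 0 ≤ r := by positivity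
      have hsq3 := sqrt3_le
      have hsq3' : 0 ≤ Real.sqrt 3 := Real.sqrt_nonneg 3
      have hrR : r < R := by rw [hrdef]; nlinarith
      set B0 := (volume (Metric.ball (0:EuclideanSpace ℝ (Fin (d - 1))) 1)).toReal with hB0def
      have hcbR : (volume (Metric.closedBall xh r)).toReal = r ^ (d-1) * B0 := by
        rw [Measure.addHaar_closedBall volume xh hr0, hfr, ENNReal.toReal_mul,
          ENNReal.toReal_ofReal (by positivity)]
      have hbR : (volume (Metric.ball xh R)).toReal = R ^ (d-1) * B0 := by
        rw [Measure.addHaar_ball volume xh hR.le, hfr, ENNReal.toReal_mul,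
          ENNReal.toReal_ofReal (by positivity)]
      have hB0nn : 0 ≤ B0 := ENNReal.toReal_nonneg
      have hratio : r ^ (d-1) ≤ 87/100 * R ^ (d-1) := by
        have h1 : r ^ (d-1) = (Real.sqrt 3 / 2) ^ (d-1) * R ^ (d-1) := by
          rw [hrdef, mul_pow]
        have h2 : (Real.sqrt 3 / 2) ^ (d-1) ≤ Real.sqrt 3 / 2 :=
          pow_le_of_le_one (by positivity) (by nlinarith) (by omega)
        have h3 : Real.sqrt 3 / 2 ≤ 87/100 := by nlinarith
        have h4 : (0:ℝ) ≤ R ^ (d-1) := by positivity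
        rw [h1]
        nlinarith [pow_le_of_le_one (by positivity : (0:ℝ) ≤ Real.sqrt 3 / 2)
          (by nlinarith : Real.sqrt 3 / 2 ≤ 1) (by omega : d - 1 ≠ 0)]
      have hballV : (volume (Metric.ball xh R)).toReal ≤ V :=
        ENNReal.toReal_mono hVfin (measure_mono hball)
      have hcble : (volume (Metric.closedBall xh r)).toReal ≤ 87/100 * V := by
        rw [hcbR]
        calc r ^ (d-1) * B0 ≤ (87/100 * R ^ (d-1)) * B0 :=
              mul_le_mul_of_nonneg_right hratio hB0nn
          _ = 87/100 * (R ^ (d-1) * B0) := by ring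
          _ ≤ 87/100 * V := by rw [← hbR] at *; nlinarith
      set W := Db \ Metric.closedBall xh r with hWdef
      have hcbsub : Metric.closedBall xh r ⊆ Db := (Metric.closedBall_subset_ball hrR).trans hball
      have hWvol : 13/100 * V ≤ (volume W).toReal := by
        have hd : volume W = volume Db - volume (Metric.closedBall xh r) :=
          measure_diff hcbsub measurableSet_closedBall.nullMeasurableSet
            measure_closedBall_lt_top.ne
        rw [hWdef] at hd ⊢
        rw [hd, ENNReal.toReal_sub_of_le (measure_mono hcbsub) hVfin]
        linarith
      have hsub : W ×ˢ Ioo 0 (y'/2) ⊆ A := by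
        rintro ⟨x, y⟩ ⟨hx, hy⟩
        obtain ⟨hxD, hxcb⟩ := hx
        refine ⟨hxD, hy.1, ?_⟩
        have hdist : r < ‖x - xh‖ := by
          rw [← dist_eq_norm]
          exact lt_of_not_ge (fun h => hxcb (Metric.mem_closedBall.2 h))
        have h3 : Real.sqrt 3 ^ 2 = 3 := Real.sq_sqrt (by norm_num)
        have hy2 : y < y'/2 := hy.2
        have h1 : 3/4 * R^2 < ‖x - xh‖^2 := by
          have : r ^ 2 = 3/4 * R^2 := by rw [hrdef]; nlinarith
          nlinarith [norm_nonneg (x - xh)]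
        have h2 : R/2 < y' - y := by linarith
        have h2' : R^2/4 < (y - y')^2 := by nlinarith
        simp only [gasRegion, mem_setOf_eq] at *
        nlinarith
      have hval : ∫ p in W ×ˢ Ioo 0 (y'/2), γ * exp (-γ * p.2)
          = (volume W).toReal * (1 - exp (-γ * (y'/2))) := by
        have h1 := prod_setIntegral W (Ioo 0 (y'/2)) (fun y => γ * exp (-γ * y))
        rw [integral_exp_Ioo hγ (by linarith)] at h1
        exact h1
      have hcol : 5/13 ≤ 1 - exp (-γ * (y'/2)) := by
        have hm : exp (-γ * (y'/2)) ≤ exp (-(1/2)) := Real.exp_le_exp.2 (by nlinarith)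
        linarith [exp_neg_half_le]
      have hmain : V / 20 ≤ (volume W).toReal * (1 - exp (-γ * (y'/2))) := by
        have h5 : (13/100 * V) * (5/13) ≤ (volume W).toReal * (1 - exp (-γ * (y'/2))) :=
          mul_le_mul hWvol hcol (by norm_num) ENNReal.toReal_nonneg
        calc V / 20 = (13/100 * V) * (5/13) := by ring
          _ ≤ _ := h5
      calc V / 20 ≤ (volume W).toReal * (1 - exp (-γ * (y'/2))) := hmain
        _ = ∫ p in W ×ˢ Ioo 0 (y'/2), γ * exp (-γ * p.2) := hval.symm
        _ ≤ Q := hQmono _ hsub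
  have hQpos : 0 < Q := lt_of_lt_of_le (by positivity) hQle
  have hV20 : V ≤ 20 * Q := by linarith
  -- Upper bound on N
  have hNle : γ * N ≤ V := by
    have hTeq : ∫ p in Db ×ˢ Ioi (0:ℝ), p.2 * (γ * exp (-γ * p.2)) = V * (1/γ) := by
      have h1 := prod_setIntegral Db (Ioi (0:ℝ)) (fun y => y * (γ * exp (-γ * y)))
      rw [integral_mul_exp_Ioi hγ] at h1
      exact h1
    have hg0T : 0 ≤ᵐ[volume.restrict (Db ×ˢ Ioi (0:ℝ))]
        (fun p : EuclideanSpace ℝ (Fin (d - 1)) × ℝ => p.2 * (γ * exp (-γ * p.2))) :=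
      (ae_restrict_iff' (hDb.prod measurableSet_Ioi)).2
        (Filter.Eventually.of_forall fun p hp => mul_nonneg (le_of_lt hp.2) (hf0 p))
    have h2 : N ≤ V * (1/γ) := by
      rw [hNdef, ← hTeq]
      exact setIntegral_mono_set hIg hg0T (HasSubset.Subset.eventuallyLE hsubT)
    calc γ * N ≤ γ * (V * (1/γ)) := mul_le_mul_of_nonneg_left h2 hγ.le
      _ = V := by field_simp
  -- Lower bound on N
  have hNge : Q / 80 ≤ γ * N := by
    set b := 1/(40*γ) with hbdef
    have hb : 0 < b := by positivity
    set A' := A ∩ Prod.snd ⁻¹' Ici b with hA'def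
    have hA' : MeasurableSet A' := hA.inter (measurable_snd measurableSet_Ici)
    have hIfA' : IntegrableOn (fun p : EuclideanSpace ℝ (Fin (d - 1)) × ℝ => γ * exp (-γ * p.2)) A' :=
      hIfA.mono_set inter_subset_left
    have hdiff : ∫ p in A \ A', γ * exp (-γ * p.2)
        = Q - ∫ p in A', γ * exp (-γ * p.2) := integral_diff hA' hIfA inter_subset_left
    have hdsub : A \ A' ⊆ Db ×ˢ Ioo 0 b := by
      rintro p ⟨hp, hp'⟩
      refine ⟨hp.1, hp.2.1, ?_⟩
      by_contra hcon
      exact hp' ⟨hp, le_of_not_gt hcon⟩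
    have hdle : ∫ p in A \ A', γ * exp (-γ * p.2) ≤ V * (1 - exp (-γ * b)) := by
      have hIfoo : IntegrableOn (fun p : EuclideanSpace ℝ (Fin (d - 1)) × ℝ => γ * exp (-γ * p.2)) (Db ×ˢ Ioo 0 b) :=
        hIf.mono_set (prod_mono_right Ioo_subset_Ioi_self)
      have hval : ∫ p in Db ×ˢ Ioo 0 b, γ * exp (-γ * p.2) = V * (1 - exp (-γ * b)) := by
        have h1 := prod_setIntegral Db (Ioo 0 b) (fun y => γ * exp (-γ * y))
        rw [integral_exp_Ioo hγ hb.le] at h1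
        exact h1
      rw [← hval]
      exact setIntegral_mono_set hIfoo (Filter.Eventually.of_forall hf0)
        (HasSubset.Subset.eventuallyLE hdsub)
    have hγb : γ * b = 1/40 := by rw [hbdef]; field_simp
    have h1me : 1 - exp (-γ * b) ≤ 1/40 := by
      have := Real.add_one_le_exp (-γ * b)
      linarith
    have hA'f : Q/2 ≤ ∫ p in A', γ * exp (-γ * p.2) := by
      have hVle : V * (1 - exp (-γ * b)) ≤ V * (1/40) :=
        mul_le_mul_of_nonneg_left h1me hV.le
      have h0le : 0 ≤ 1 - exp (-γ * b) := by
        have : exp (-γ * b) ≤ exp 0 := Real.exp_le_exp.2 (by nlinarith)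
        simp only [Real.exp_zero] at this
        linarith
      nlinarith [hdiff, hdle]
    have hmono1 : ∫ p in A', b * (γ * exp (-γ * p.2))
        ≤ ∫ p in A', p.2 * (γ * exp (-γ * p.2)) := by
      refine setIntegral_mono_on (hIfA'.const_mul b) (hIgA.mono_set inter_subset_left) hA' ?_
      rintro p ⟨_, hp2⟩
      exact mul_le_mul_of_nonneg_right hp2 (hf0 p)
    have hconst : ∫ p in A', b * (γ * exp (-γ * p.2)) = b * ∫ p in A', γ * exp (-γ * p.2) :=
      integral_const_mul b _
    have hg0A : 0 ≤ᵐ[volume.restrict A] (fun p : EuclideanSpace ℝ (Fin (d - 1)) × ℝ => p.2 * (γ * exp (-γ * p.2))) :=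
      (ae_restrict_iff' hA).2
        (Filter.Eventually.of_forall fun p hp => mul_nonneg hp.2.1.le (hf0 p))
    have hmono2 : ∫ p in A', p.2 * (γ * exp (-γ * p.2)) ≤ N :=
      setIntegral_mono_set hIgA hg0A (HasSubset.Subset.eventuallyLE inter_subset_left)
    have hNb : b * (Q/2) ≤ N := by
      calc b * (Q/2) ≤ b * ∫ p in A', γ * exp (-γ * p.2) :=
            mul_le_mul_of_nonneg_left hA'f hb.le
        _ = ∫ p in A', b * (γ * exp (-γ * p.2)) := hconst.symm
        _ ≤ ∫ p in A', p.2 * (γ * exp (-γ * p.2)) := hmono1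
        _ ≤ N := hmono2
    calc Q/80 = γ * b * (Q/2) := by rw [hγb]; ring
      _ ≤ γ * N := by nlinarith
  -- assemble
  have hu : γ * gasMeanHeight d Db xh R y' γ = γ * N / Q := by
    rw [gasMeanHeight, ← hQdef, ← hNdef]
    ring
  have ht1 : exp (-(1/2:ℝ)) ≤ 8/13 := exp_neg_half_le
  have ht2 : (3:ℝ)/5 ≤ exp (-(1/2:ℝ)) := exp_neg_half_ge
  have htpos : (0:ℝ) < 1 - exp (-(1/2:ℝ)) := by linarith
  refine ⟨?_, ?_, ?_⟩
  · rw [hu, le_div_iff₀ hQpos]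
    linarith
  · rw [hu, div_le_div_iff₀ hQpos htpos]
    nlinarith
  · rw [div_lt_iff₀ htpos]
    linarith
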